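/- arXiv:1808.08094 — 2 statements merged into one kernel-verified Lean document; each statement's English description precedes it below -/
import Mathlib

section
/- Huet's lemma: a terminating transition system is confluent modulo an equivalence ∼ if and only if it is locally confluent modulo ∼. That is, if → is a binary relation on a set A whose converse is well-founded, and ∼ is an equivalence relation on A, then → is confluent modulo ∼ (whenever s₁ *← s₀ ∼ s₀' →* s₂, the states s₁ and s₂ are joinable modulo ∼) if and only if → is locally confluent modulo ∼ (every α-corner s₁ ← s₀ → s₂ and every β-corner s₁ ∼ s₀ → s₂ has s₁ and s₂ joinable modulo ∼). -/
open Relation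

/-- Joinability modulo `e`. -/
private def HuetJoin {A : Type*} (r e : A → A → Prop) (a b : A) : Prop :=
  ∃ u v : A, Relation.ReflTransGen r a u ∧ Relation.ReflTransGen r b v ∧ e u v

/-- Gap-closing lemma: if `a ∼ m →* m' ∼ c` and cliff-closure holds for all
states reachable from `m`, then `a` and `c` are joinable modulo `e`. -/
private theorem huet_gap {A : Type*} (r e : A → A → Prop) (hequiv : Equivalence e)
    (hterm : WellFounded (fun s t => r t s)) :
    ∀ m : A,
      (∀ t, ReflTransGen r m t → ∀ a c, e a t → ReflTransGen r t c → HuetJoin r e a c) →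
      ∀ a c m', e a m → ReflTransGen r m m' → e m' c → HuetJoin r e a c := by
  have wf : WellFounded (fun s t : A => TransGen r t s) :=
    Subrelation.wf (fun {s t} hst => transGen_swap.2 hst) hterm.transGen
  intro m
  induction m using wf.induction with
  | _ m ih =>
    intro HQ a c m' ham hmm' hm'c
    rcases hmm'.cases_head with rfl | ⟨m₁, hm1, h1m'⟩
    · exact ⟨a, c, ReflTransGen.refl, ReflTransGen.refl, hequiv.trans ham hm'c⟩
    · have hmne : TransGen r m m' := TransGen.head' hm1 h1m'
      -- cliff closure at m: from a ∼ m →* m' get a →* a', m' →* m₂, a' ∼ m₂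
      obtain ⟨a', m₂, haa', hm'm₂, hea'm₂⟩ := HQ m ReflTransGen.refl a m' ham hmm'
      -- recurse on the strictly smaller middle m' with gap c ∼ m' →* m₂ ∼ a'
      have HQ' : ∀ t, ReflTransGen r m' t →
          ∀ a c, e a t → ReflTransGen r t c → HuetJoin r e a c :=
        fun t ht => HQ t (hmm'.trans ht)
      obtain ⟨C, A', hcC, ha'A', heCA'⟩ :=
        ih m' hmne HQ' c a' m₂ (hequiv.symm hm'c) hm'm₂ (hequiv.symm hea'm₂)
      exact ⟨A', C, haa'.trans ha'A', hcC, hequiv.symm heCA'⟩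

/-- Main induction: peak closure and cliff closure at every point. -/
private theorem huet_main {A : Type*} (r e : A → A → Prop) (hequiv : Equivalence e)
    (hterm : WellFounded (fun s t => r t s))
    (hα : ∀ s₀ s₁ s₂ : A, r s₀ s₁ → r s₀ s₂ → HuetJoin r e s₁ s₂)
    (hβ : ∀ s₀ s₁ s₂ : A, e s₁ s₀ → r s₀ s₂ → HuetJoin r e s₁ s₂) :
    ∀ x : A,
      (∀ y z, ReflTransGen r x y → ReflTransGen r x z → HuetJoin r e y z) ∧
      (∀ a c, e a x → ReflTransGen r x c → HuetJoin r e a c) := by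
  have wf : WellFounded (fun s t : A => TransGen r t s) :=
    Subrelation.wf (fun {s t} hst => transGen_swap.2 hst) hterm.transGen
  intro x
  induction x using wf.induction with
  | _ x ih =>
    constructor
    · -- peak closure at x
      intro y z hxy hxz
      rcases hxy.cases_head with rfl | ⟨y₁, hxy₁, hy₁y⟩
      · exact ⟨z, z, hxz, ReflTransGen.refl, hequiv.refl z⟩
      rcases hxz.cases_head with rfl | ⟨z₁, hxz₁, hz₁z⟩
      · exact ⟨y, y, ReflTransGen.refl, hxy, hequiv.refl y⟩
      obtain ⟨u, v, hy₁u, hz₁v, heuv⟩ := hα x y₁ z₁ hxy₁ hxz₁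
      obtain ⟨Py₁, _⟩ := ih y₁ (TransGen.single hxy₁)
      obtain ⟨y', u₁, hyy', huu₁, hey'u₁⟩ := Py₁ y u hy₁y hy₁u
      -- gap: v ∼ u →* u₁ ∼ y'
      have hxu : TransGen r x u := TransGen.head' hxy₁ hy₁u
      have HQu : ∀ t, ReflTransGen r u t →
          ∀ a c, e a t → ReflTransGen r t c → HuetJoin r e a c :=
        fun t ht => (ih t (hxu.trans_left ht)).2
      obtain ⟨v₁, y₂, hvv₁, hy'y₂, hev₁y₂⟩ :=
        huet_gap r e hequiv hterm u HQu v y' u₁ (hequiv.symm heuv) huu₁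
          (hequiv.symm hey'u₁)
      obtain ⟨Pz₁, _⟩ := ih z₁ (TransGen.single hxz₁)
      obtain ⟨z', v₂, hzz', hv₁v₂, hez'v₂⟩ := Pz₁ z v₁ hz₁z (hz₁v.trans hvv₁)
      -- gap: y₂ ∼ v₁ →* v₂ ∼ z'
      have hxv₁ : TransGen r x v₁ := TransGen.head' hxz₁ (hz₁v.trans hvv₁)
      have HQv₁ : ∀ t, ReflTransGen r v₁ t →
          ∀ a c, e a t → ReflTransGen r t c → HuetJoin r e a c :=
        fun t ht => (ih t (hxv₁.trans_left ht)).2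
      obtain ⟨Y, Z, hy₂Y, hz'Z, heYZ⟩ :=
        huet_gap r e hequiv hterm v₁ HQv₁ y₂ z' v₂ (hequiv.symm hev₁y₂) hv₁v₂
          (hequiv.symm hez'v₂)
      exact ⟨Y, Z, hyy'.trans (hy'y₂.trans hy₂Y), hzz'.trans hz'Z, heYZ⟩
    · -- cliff closure at x
      intro a c ham hxc
      rcases hxc.cases_head with rfl | ⟨c₁, hxc₁, hc₁c⟩
      · exact ⟨a, x, ReflTransGen.refl, ReflTransGen.refl, ham⟩
      obtain ⟨u, v, hau, hc₁v, heuv⟩ := hβ x a c₁ ham hxc₁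
      obtain ⟨Pc₁, _⟩ := ih c₁ (TransGen.single hxc₁)
      obtain ⟨c', v₁, hcc', hvv₁, hec'v₁⟩ := Pc₁ c v hc₁c hc₁v
      -- gap: u ∼ v →* v₁ ∼ c'
      have hxv : TransGen r x v := TransGen.head' hxc₁ hc₁v
      have HQv : ∀ t, ReflTransGen r v t →
          ∀ a c, e a t → ReflTransGen r t c → HuetJoin r e a c :=
        fun t ht => (ih t (hxv.trans_left ht)).2
      obtain ⟨U, C, huU, hc'C, heUC⟩ :=
        huet_gap r e hequiv hterm v HQv u c' v₁ heuv hvv₁ (hequiv.symm hec'v₁)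
      exact ⟨U, C, hau.trans huU, hcc'.trans hc'C, heUC⟩

/-- Huet's lemma: a terminating transition system is confluent modulo an
equivalence `e` if and only if it is locally confluent modulo `e`
(all α-corners and β-corners are joinable modulo `e`). -/
theorem huet_lemma {A : Type*} (r : A → A → Prop) (e : A → A → Prop)
    (hequiv : Equivalence e)
    (hterm : WellFounded (fun s t => r t s)) :
    (∀ s₀ s₀' s₁ s₂ : A, Relation.ReflTransGen r s₀ s₁ → e s₀ s₀' →
        Relation.ReflTransGen r s₀' s₂ →
        ∃ u₁ u₂ : A, Relation.ReflTransGen r s₁ u₁ ∧ Relation.ReflTransGen r s₂ u₂ ∧ e u₁ u₂) ↔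
    ((∀ s₀ s₁ s₂ : A, r s₀ s₁ → r s₀ s₂ →
        ∃ u₁ u₂ : A, Relation.ReflTransGen r s₁ u₁ ∧ Relation.ReflTransGen r s₂ u₂ ∧ e u₁ u₂) ∧
     (∀ s₀ s₁ s₂ : A, e s₁ s₀ → r s₀ s₂ →
        ∃ u₁ u₂ : A, Relation.ReflTransGen r s₁ u₁ ∧ Relation.ReflTransGen r s₂ u₂ ∧ e u₁ u₂)) := by
  constructor
  · intro h
    refine ⟨fun s₀ s₁ s₂ h1 h2 =>
      h s₀ s₀ s₁ s₂ (ReflTransGen.single h1) (hequiv.refl s₀) (ReflTransGen.single h2),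
      fun s₀ s₁ s₂ he hr =>
      h s₁ s₀ s₁ s₂ ReflTransGen.refl he (ReflTransGen.single hr)⟩
  · rintro ⟨hα, hβ⟩ s₀ s₀' s₁ s₂ h01 h00' h0'2
    have hmain := huet_main r e hequiv hterm hα hβ
    -- cliff closure at s₀': s₀ ∼ s₀' →* s₂
    obtain ⟨p, q, h0p, h2q, hepq⟩ := (hmain s₀').2 s₀ s₂ h00' h0'2
    -- peak closure at s₀: s₁ *← s₀ →* p
    obtain ⟨u, p₁, h1u, hpp₁, heup₁⟩ := (hmain s₀).1 s₁ p h01 h0p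
    -- gap: q ∼ p →* p₁ ∼ u
    have HQp : ∀ t, ReflTransGen r p t →
        ∀ a c, e a t → ReflTransGen r t c → HuetJoin r e a c :=
      fun t _ => (hmain t).2
    obtain ⟨Q₁, U₁, hqQ₁, huU₁, heQ₁U₁⟩ :=
      huet_gap r e hequiv hterm p HQp q u p₁ (hequiv.symm hepq) hpp₁
        (hequiv.symm heup₁)
    exact ⟨U₁, Q₁, h1u.trans huU₁, h2q.trans hqQ₁, hequiv.symm heQ₁U₁⟩
end

section
/- Huet's lemma under invariant: let I be an invariant of a transition system (A, →) that is terminating under I (every transition sequence consisting of I-states is finite), and let ∼ be an equivalence relation on A. Then the system is observably confluent modulo ∼ (for all I-states s₀, s₀', s₁, s₂, if s₁ *← s₀ ∼ s₀' →* s₂ then s₁ and s₂ are joinable modulo ∼ via I-states) if and only if it is locally observably confluent modulo ∼ (for all I-states, the extreme states of every α-corner s₁ ← s₀ → s₂ and of every β-corner s₁ ∼ s₀ → s₂ with s₀, s₁, s₂ ∈ I are joinable modulo ∼ via I-states). -/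
open Ordinal in
/-- Huet's lemma under invariant: if `I` is an invariant, the system is
terminating under `I`, and `e` is an equivalence, then the system is observably
confluent modulo `e` (joinable modulo `e` via `I`-states) iff it is locally
observably confluent modulo `e` (all observable α- and β-corners are joinable
modulo `e` via `I`-states). -/
theorem huet_lemma_under_invariant {A : Type*} (r : A → A → Prop) (e : A → A → Prop)
    (I : Set A)
    (hequiv : Equivalence e)
    (hinv : ∀ s s' : A, s ∈ I → r s s' → s' ∈ I)
    (hterm : WellFounded (fun s t => (t ∈ I ∧ s ∈ I ∧ r t s))) :
    (∀ s₀ s₀' s₁ s₂ : A, s₀ ∈ I → s₀' ∈ I → s₁ ∈ I → s₂ ∈ I →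
        Relation.ReflTransGen r s₀ s₁ → e s₀ s₀' → Relation.ReflTransGen r s₀' s₂ →
        ∃ u₁ u₂ : A,
          Relation.ReflTransGen (fun a b => a ∈ I ∧ b ∈ I ∧ r a b) s₁ u₁ ∧
          Relation.ReflTransGen (fun a b => a ∈ I ∧ b ∈ I ∧ r a b) s₂ u₂ ∧ e u₁ u₂) ↔
    ((∀ s₀ s₁ s₂ : A, s₀ ∈ I → s₁ ∈ I → s₂ ∈ I →
        r s₀ s₁ → r s₀ s₂ →
        ∃ u₁ u₂ : A,
          Relation.ReflTransGen (fun a b => a ∈ I ∧ b ∈ I ∧ r a b) s₁ u₁ ∧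
          Relation.ReflTransGen (fun a b => a ∈ I ∧ b ∈ I ∧ r a b) s₂ u₂ ∧ e u₁ u₂) ∧
     (∀ s₀ s₁ s₂ : A, s₀ ∈ I → s₁ ∈ I → s₂ ∈ I →
        e s₁ s₀ → r s₀ s₂ →
        ∃ u₁ u₂ : A,
          Relation.ReflTransGen (fun a b => a ∈ I ∧ b ∈ I ∧ r a b) s₁ u₁ ∧
          Relation.ReflTransGen (fun a b => a ∈ I ∧ b ∈ I ∧ r a b) s₂ u₂ ∧ e u₁ u₂)) := by
  classical
  set r' : A → A → Prop := fun a b => a ∈ I ∧ b ∈ I ∧ r a b with hr'def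
  -- membership is preserved along restricted reduction sequences
  have memRT : ∀ {a b : A}, Relation.ReflTransGen r' a b → a ∈ I → b ∈ I := by
    intro a b h ha
    induction h with
    | refl => exact ha
    | tail _ h2 _ => exact h2.2.1
  -- lift unrestricted reduction sequences from `I`-states to restricted ones
  have liftRT : ∀ {a b : A}, a ∈ I → Relation.ReflTransGen r a b →
      Relation.ReflTransGen r' a b := by
    intro a b ha h
    induction h with
    | refl => exact .refl
    | tail h1 h2 ih =>
      exact ih.tail ⟨memRT ih ha, hinv _ _ (memRT ih ha) h2, h2⟩
  -- existence of normal forms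
  have nf_exists : ∀ x, x ∈ I → ∃ n, Relation.ReflTransGen r' x n ∧ ∀ y, ¬ r' n y := by
    intro x
    refine hterm.induction
      (C := fun x => x ∈ I → ∃ n, Relation.ReflTransGen r' x n ∧ ∀ y, ¬ r' n y) x ?_
    intro z ih hz
    by_cases hstep : ∃ y, r' z y
    · obtain ⟨y, hy⟩ := hstep
      obtain ⟨n, hn1, hn2⟩ := ih y hy hy.2.1
      exact ⟨n, .head hy hn1, hn2⟩
    · exact ⟨z, .refl, fun y hy => hstep ⟨y, hy⟩⟩
  have nf_stop : ∀ {n m : A}, (∀ y, ¬ r' n y) → Relation.ReflTransGen r' n m → m = n := by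
    intro n m hn h
    rcases h.cases_head with h' | ⟨c, hc, _⟩
    · exact h'.symm
    · exact absurd hc (hn c)
  -- rank measure
  let rk : A → Ordinal := fun x => (hterm.apply x).rank
  have rk_step : ∀ {u v : A}, r' u v → rk v < rk u := by
    intro u v h
    exact Acc.rank_lt_of_rel (hterm.apply u) h
  have rk_le : ∀ {u v : A}, Relation.ReflTransGen r' u v → rk v ≤ rk u := by
    intro u v h
    induction h with
    | refl => exact le_rfl
    | tail _ h2 ih => exact (rk_step h2).le.trans ih
  -- ordinal arithmetic for the Dershowitz–Manna style measure
  have hprin : ∀ {s s' t : Ordinal}, s < t → s' < t → ω ^ s + ω ^ s' < ω ^ t := by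
    intro s s' t hs hs'
    exact principal_add_omega0_opow t
      ((opow_lt_opow_iff_right one_lt_omega0).2 hs)
      ((opow_lt_opow_iff_right one_lt_omega0).2 hs')
  have D2 : ∀ {x a b : Ordinal}, x ≤ a ⊔ b → ω ^ x < ω ^ (a ⊔ b) + ω ^ (a ⊓ b) := by
    intro x a b hx
    have h1 : ω ^ x ≤ ω ^ (a ⊔ b) := opow_le_opow_right omega0_pos hx
    have h2 : (0 : Ordinal) < ω ^ (a ⊓ b) := opow_pos _ omega0_pos
    have h3 : ω ^ (a ⊔ b) + 0 < ω ^ (a ⊔ b) + ω ^ (a ⊓ b) := add_lt_add_right h2 _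
    rw [add_zero] at h3
    exact h1.trans_lt h3
  have D3 : ∀ {x y a b : Ordinal}, x ≤ a → y < b →
      ω ^ (x ⊔ y) + ω ^ (x ⊓ y) < ω ^ (a ⊔ b) + ω ^ (a ⊓ b) := by
    intro x y a b hx hy
    have hsup : x ⊔ y ≤ a ⊔ b := sup_le (hx.trans le_sup_left) (hy.le.trans le_sup_right)
    rcases hsup.lt_or_eq with h | h
    · exact (hprin h (inf_le_sup.trans_lt h)).trans_le le_self_add
    · have hyx : y ≤ x := by
        rcases le_total y x with h' | h'
        · exact h'
        · exfalso
          rw [sup_eq_right.2 h'] at h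
          exact ((hy.trans_le le_sup_right).trans_eq h.symm).false
      have hxeq : x = a ⊔ b := by rw [← h, sup_eq_left.2 hyx]
      have hba : b ≤ a := by
        by_contra hc
        push_neg at hc
        have hxb : x < b := hx.trans_lt hc
        rw [hxeq, sup_eq_right.2 hc.le] at hxb
        exact hxb.false
      have e2 : x ⊓ y = y := inf_eq_right.2 hyx
      have e3 : a ⊓ b = b := inf_eq_right.2 hba
      rw [h, e2, e3]
      exact add_lt_add_right ((opow_lt_opow_iff_right one_lt_omega0).2 hy) _
  have mcomm : ∀ x y : Ordinal, ω ^ (x ⊔ y) + ω ^ (x ⊓ y) = ω ^ (y ⊔ x) + ω ^ (y ⊓ x) := by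
    intro x y
    rw [sup_comm, inf_comm]
  constructor
  · -- easy direction
    intro H
    constructor
    · intro s₀ s₁ s₂ h0 h1 h2 hr1 hr2
      exact H s₀ s₀ s₁ s₂ h0 h0 h1 h2 (.single hr1) (hequiv.refl _) (.single hr2)
    · intro s₀ s₁ s₂ h0 h1 h2 he hr
      exact H s₁ s₀ s₁ s₂ h1 h0 h1 h2 .refl he (.single hr)
  · rintro ⟨hα, hβ⟩ s₀ s₀' s₁ s₂ h0 h0' h1 h2 hr1 he hr2
    -- key mutual induction: uniqueness of normal forms modulo `e`
    have key : ∀ o : Ordinal,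
        (∀ x, x ∈ I → ω ^ rk x < o → ∀ n₁ n₂, Relation.ReflTransGen r' x n₁ →
          Relation.ReflTransGen r' x n₂ → (∀ y, ¬ r' n₁ y) → (∀ y, ¬ r' n₂ y) → e n₁ n₂) ∧
        (∀ a b, a ∈ I → b ∈ I → ω ^ (rk a ⊔ rk b) + ω ^ (rk a ⊓ rk b) < o → e a b →
          ∀ n₁ n₂, Relation.ReflTransGen r' a n₁ → Relation.ReflTransGen r' b n₂ →
          (∀ y, ¬ r' n₁ y) → (∀ y, ¬ r' n₂ y) → e n₁ n₂) := by
      intro o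
      induction o using Ordinal.induction with
      | h o IH =>
      constructor
      · -- peaks from a common source
        intro x hx hxo n₁ n₂ hh1 hh2 hn1 hn2
        rcases hh1.cases_head with rfl | ⟨y₁, hy₁, hh1'⟩
        · rw [nf_stop hn1 hh2]
          exact hequiv.refl _
        · rcases hh2.cases_head with rfl | ⟨y₂, hy₂, hh2'⟩
          · rw [nf_stop hn2 hh1]
            exact hequiv.refl _
          · obtain ⟨c, d, hc, hd, hcd⟩ := hα x y₁ y₂ hx hy₁.2.1 hy₂.2.1 hy₁.2.2 hy₂.2.2
            obtain ⟨c', hc', hc'nf⟩ := nf_exists c (memRT hc hy₁.2.1)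
            obtain ⟨d', hd', hd'nf⟩ := nf_exists d (memRT hd hy₂.2.1)
            have hIH := IH (ω ^ rk x) hxo
            have e1 : e n₁ c' := hIH.1 y₁ hy₁.2.1
              ((opow_lt_opow_iff_right one_lt_omega0).2 (rk_step hy₁)) n₁ c'
              hh1' (hc.trans hc') hn1 hc'nf
            have e2 : e n₂ d' := hIH.1 y₂ hy₂.2.1
              ((opow_lt_opow_iff_right one_lt_omega0).2 (rk_step hy₂)) n₂ d'
              hh2' (hd.trans hd') hn2 hd'nf
            have hsx : rk c ⊔ rk d < rk x :=
              sup_lt_iff.mpr ⟨(rk_le hc).trans_lt (rk_step hy₁),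
                (rk_le hd).trans_lt (rk_step hy₂)⟩
            have e3 : e c' d' := hIH.2 c d (memRT hc hy₁.2.1) (memRT hd hy₂.2.1)
              (hprin hsx (inf_le_sup.trans_lt hsx)) hcd c' d' hc' hd' hc'nf hd'nf
            exact hequiv.trans (hequiv.trans e1 e3) (hequiv.symm e2)
      · -- `e`-related sources
        intro a b ha hb habo hab n₁ n₂ hh1 hh2 hn1 hn2
        have hIH := IH _ habo
        rcases hh2.cases_head with rfl | ⟨b₁, hb₁, hh2'⟩
        · rcases hh1.cases_head with rfl | ⟨a₁, ha₁, hh1'⟩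
          · exact hab
          · obtain ⟨u₁, u₂, hu₁, hu₂, hu⟩ := hβ a b a₁ ha hb ha₁.2.1 (hequiv.symm hab) ha₁.2.2
            rw [nf_stop hn2 hu₁] at hu
            obtain ⟨q', hq', hq'nf⟩ := nf_exists u₂ (memRT hu₂ ha₁.2.1)
            have e1 : e n₁ q' := hIH.1 a₁ ha₁.2.1
              (D2 ((rk_step ha₁).le.trans le_sup_left)) n₁ q' hh1' (hu₂.trans hq') hn1 hq'nf
            have e2 : e q' b := hIH.2 u₂ b (memRT hu₂ ha₁.2.1) hb
              (by rw [mcomm (rk u₂) (rk b), mcomm (rk a) (rk b)]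
                  exact D3 le_rfl ((rk_le hu₂).trans_lt (rk_step ha₁)))
              (hequiv.symm hu) q' b hq' .refl hq'nf hn2
            exact hequiv.trans e1 e2
        · obtain ⟨p, q, hp, hq, hpq⟩ := hβ b a b₁ hb ha hb₁.2.1 hab hb₁.2.2
          obtain ⟨p', hp', hp'nf⟩ := nf_exists p (memRT hp ha)
          obtain ⟨q', hq', hq'nf⟩ := nf_exists q (memRT hq hb₁.2.1)
          have e1 : e n₁ p' := hIH.1 a ha (D2 le_sup_left) n₁ p' hh1 (hp.trans hp') hn1 hp'nf
          have e2 : e p' q' := hIH.2 p q (memRT hp ha) (memRT hq hb₁.2.1)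
            (D3 (rk_le hp) ((rk_le hq).trans_lt (rk_step hb₁))) hpq p' q' hp' hq' hp'nf hq'nf
          have e3 : e q' n₂ := hIH.1 b₁ hb₁.2.1
            (D2 ((rk_step hb₁).le.trans le_sup_right)) q' n₂ (hq.trans hq') hh2' hq'nf hn2
          exact hequiv.trans (hequiv.trans e1 e2) e3
    -- assemble: reduce both sides to normal forms
    have hs₁ : Relation.ReflTransGen r' s₀ s₁ := liftRT h0 hr1
    have hs₂ : Relation.ReflTransGen r' s₀' s₂ := liftRT h0' hr2
    obtain ⟨n₁, hn₁, hn₁nf⟩ := nf_exists s₁ h1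
    obtain ⟨n₂, hn₂, hn₂nf⟩ := nf_exists s₂ h2
    have hlt : ω ^ (rk s₀ ⊔ rk s₀') + ω ^ (rk s₀ ⊓ rk s₀') <
        ω ^ (rk s₀ ⊔ rk s₀') + ω ^ (rk s₀ ⊓ rk s₀') + 1 := by
      have := add_lt_add_right (zero_lt_one (α := Ordinal))
        (ω ^ (rk s₀ ⊔ rk s₀') + ω ^ (rk s₀ ⊓ rk s₀'))
      rwa [add_zero] at this
    have hfin := (key _).2 s₀ s₀' h0 h0' hlt he n₁ n₂
      (hs₁.trans hn₁) (hs₂.trans hn₂) hn₁nf hn₂nf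
    exact ⟨n₁, n₂, hn₁, hn₂, hfin⟩
end
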